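/- For every integer k ≥ 2 and all real numbers x, y with y > 0, the k-th power of the matrix r_k(x,y) equals −y^k times the 2×2 identity matrix; in particular r_k(x,y) represents an elliptic element of order k in PSL(2,ℝ), and r_2(x,y)² = −y²·I. -/

import Mathlib

/-- The elliptic rotation matrix r_k(x,y). -/
noncomputable def rk (k : ℕ) (x y : ℝ) : Matrix (Fin 2) (Fin 2) ℝ :=
  !![Real.cos (Real.pi / k) * y - Real.sin (Real.pi / k) * x,
     Real.sin (Real.pi / k) * (y ^ 2 + x ^ 2);
     -Real.sin (Real.pi / k),
     Real.cos (Real.pi / k) * y + Real.sin (Real.pi / k) * x]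

/-- Rotation matrix. -/
noncomputable def rkRot (θ : ℝ) : Matrix (Fin 2) (Fin 2) ℝ :=
  !![Real.cos θ, Real.sin θ; -Real.sin θ, Real.cos θ]

lemma rkRot_mul (a b : ℝ) : rkRot a * rkRot b = rkRot (a + b) := by
  ext i j
  fin_cases i <;> fin_cases j <;>
    simp [rkRot, Matrix.mul_apply, Fin.sum_univ_succ, Real.cos_add, Real.sin_add] <;> ring

lemma rkRot_pow (θ : ℝ) (n : ℕ) : rkRot θ ^ n = rkRot (n * θ) := by
  induction n with
  | zero =>
    ext i j
    fin_cases i <;> fin_cases j <;> simp [rkRot]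
  | succ n ih =>
    rw [pow_succ, ih, rkRot_mul]
    congr 1
    push_cast
    ring

lemma rk_conj_pow (g A h : Matrix (Fin 2) (Fin 2) ℝ) (hgh : g * h = 1) (hhg : h * g = 1)
    (n : ℕ) : (g * A * h) ^ n = g * A ^ n * h := by
  induction n with
  | zero => simp [hgh]
  | succ n ih =>
    rw [pow_succ, ih, pow_succ]
    calc g * A ^ n * h * (g * A * h) = g * A ^ n * (h * g) * A * h := by
          simp only [Matrix.mul_assoc]
    _ = g * (A ^ n * A) * h := by rw [hhg]; simp only [Matrix.mul_assoc, Matrix.mul_one]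

lemma rk_conj (k : ℕ) (x y : ℝ) (hy : y ≠ 0) :
    rk k x y = !![y, x; 0, 1] * (y • rkRot (Real.pi / k)) * !![y⁻¹, -x * y⁻¹; 0, 1] := by
  ext i j
  fin_cases i <;> fin_cases j <;>
    simp [rk, rkRot, Matrix.mul_apply, Fin.sum_univ_succ] <;> field_simp <;> ring

theorem rk_pow (k : ℕ) (hk : 2 ≤ k) (x y : ℝ) (hy : 0 < y) :
    rk k x y ^ k = (-(y ^ k)) • (1 : Matrix (Fin 2) (Fin 2) ℝ) ∧
    rk 2 x y ^ 2 = (-(y ^ 2)) • (1 : Matrix (Fin 2) (Fin 2) ℝ) := by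
  have key : ∀ m : ℕ, 2 ≤ m → rk m x y ^ m = (-(y ^ m)) • (1 : Matrix (Fin 2) (Fin 2) ℝ) := by
    intro m hm
    have hy0 : y ≠ 0 := ne_of_gt hy
    have hgh : (!![y, x; 0, 1] : Matrix (Fin 2) (Fin 2) ℝ) * !![y⁻¹, -x * y⁻¹; 0, 1] = 1 := by
      ext i j
      fin_cases i <;> fin_cases j <;>
        simp [Matrix.mul_apply, Fin.sum_univ_succ, hy0] <;> field_simp <;> ring
    have hhg : (!![y⁻¹, -x * y⁻¹; 0, 1] : Matrix (Fin 2) (Fin 2) ℝ) * !![y, x; 0, 1] = 1 := by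
      ext i j
      fin_cases i <;> fin_cases j <;>
        simp [Matrix.mul_apply, Fin.sum_univ_succ, hy0] <;> field_simp <;> ring
    have hm0 : (m : ℝ) ≠ 0 := by positivity
    have hrot : rkRot (Real.pi / m) ^ m = (-1 : ℝ) • (1 : Matrix (Fin 2) (Fin 2) ℝ) := by
      rw [rkRot_pow]
      have : (m : ℝ) * (Real.pi / m) = Real.pi := by field_simp
      rw [this]
      ext i j
      fin_cases i <;> fin_cases j <;> simp [rkRot]
    rw [rk_conj m x y hy0, rk_conj_pow _ _ _ hgh hhg, smul_pow, hrot, smul_smul,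
      mul_neg_one, Matrix.mul_smul, Matrix.mul_one, Matrix.smul_mul, hgh]
  exact ⟨key k hk, key 2 le_rfl⟩
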